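/- Let d ≥ 1, σ > 0, and μ0, μ1 ∈ ℝ^d. Let N(μ, σ² I_d) denote the Gaussian measure on ℝ^d with mean μ and covariance σ² I_d, i.e., the product over coordinates j of gaussianReal(μ_j, σ²). Then tv(N(μ0, σ² I_d), N(μ1, σ² I_d)) = erf(‖μ0 − μ1‖₂ / (2√2 σ)), where ‖·‖₂ is the Euclidean norm. -/

import Mathlib

open MeasureTheory ProbabilityTheory

open Real in
open scoped NNReal ENNReal in
private lemma pdf_conv_pointwise' (m1 m2 : ℝ) (v1 v2 : ℝ≥0) (hv1 : v1 ≠ 0) (hv2 : v2 ≠ 0)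
    (z x : ℝ) :
    gaussianPDFReal m1 v1 x * gaussianPDFReal m2 v2 (z - x)
    = gaussianPDFReal (m1+m2) (v1+v2) z
      * gaussianPDFReal (m1 + v1*(z-m1-m2)/(v1+v2)) (v1*v2/(v1+v2)) x := by
  have hw1 : (0:ℝ) < v1 := by positivity
  have hw2 : (0:ℝ) < v2 := by positivity
  have hw12 : (0:ℝ) < (v1:ℝ) + v2 := by linarith
  simp only [gaussianPDFReal]
  push_cast
  rw [mul_mul_mul_comm, mul_mul_mul_comm ((√(2 * π * ((v1:ℝ)+v2)))⁻¹)]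
  congr 1
  · rw [← mul_inv, ← mul_inv, ← Real.sqrt_mul (by positivity), ← Real.sqrt_mul (by positivity)]
    congr 1
    field_simp
  · rw [← Real.exp_add, ← Real.exp_add]
    congr 1
    field_simp
    ring

open Real in
open scoped NNReal ENNReal in
private lemma gaussian_prod_map_add (m1 m2 : ℝ) (v1 v2 : ℝ≥0) :
    ((gaussianReal m1 v1).prod (gaussianReal m2 v2)).map (fun p : ℝ × ℝ => p.1 + p.2)
      = gaussianReal (m1 + m2) (v1 + v2) := by
  by_cases hv1 : v1 = 0
  · subst hv1
    rw [gaussianReal_zero_var, Measure.dirac_prod,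
      Measure.map_map measurable_add measurable_prodMk_left]
    have : ((fun p : ℝ × ℝ => p.1 + p.2) ∘ Prod.mk m1) = (m1 + ·) := rfl
    rw [this, gaussianReal_map_const_add (μ := m2) (v := v2) m1, add_comm m2 m1, zero_add]
  by_cases hv2 : v2 = 0
  · subst hv2
    rw [gaussianReal_zero_var, Measure.prod_dirac,
      Measure.map_map measurable_add measurable_prodMk_right]
    have : ((fun p : ℝ × ℝ => p.1 + p.2) ∘ fun x => (x, m2)) = (· + m2) := rfl
    rw [this, gaussianReal_map_add_const (μ := m1) (v := v1) m2, add_zero]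
  have hv12 : v1 + v2 ≠ 0 := by simp [hv1, hv2]
  have hvs : v1 * v2 / (v1 + v2) ≠ 0 := by
    rw [div_ne_zero_iff]
    exact ⟨mul_ne_zero hv1 hv2, hv12⟩
  ext s hs
  have hG : Measurable fun p : ℝ × ℝ => gaussianPDF (m2 + p.1) v2 p.2 := by
    have : Measurable fun p : ℝ × ℝ => gaussianPDFReal (m2 + p.1) v2 p.2 := by
      simp only [gaussianPDFReal]
      fun_prop
    exact this.ennreal_ofReal
  have hGind : Measurable fun p : ℝ × ℝ => s.indicator (gaussianPDF (m2 + p.1) v2) p.2 := by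
    have heq : (fun p : ℝ × ℝ => s.indicator (gaussianPDF (m2 + p.1) v2) p.2)
        = (Prod.snd ⁻¹' s).indicator (fun p => gaussianPDF (m2 + p.1) v2 p.2) := by
      ext p
      by_cases h : p.2 ∈ s <;> simp [Set.indicator, h]
    rw [heq]
    exact hG.indicator (hs.preimage measurable_snd)
  rw [Measure.map_apply (by fun_prop) hs,
    Measure.prod_apply (measurable_add hs)]
  have h1 : ∀ x : ℝ, (gaussianReal m2 v2) (Prod.mk x ⁻¹' ((fun p : ℝ × ℝ => p.1 + p.2) ⁻¹' s))
      = ∫⁻ y in s, gaussianPDF (m2 + x) v2 y := by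
    intro x
    have : Prod.mk x ⁻¹' ((fun p : ℝ × ℝ => p.1 + p.2) ⁻¹' s) = (· + x) ⁻¹' s := by
      ext y; simp [add_comm]
    rw [this, ← Measure.map_apply (by fun_prop) hs, gaussianReal_map_add_const,
      gaussianReal_apply _ hv2 s]
  simp_rw [h1]
  rw [gaussianReal_of_var_ne_zero m1 hv1,
    lintegral_withDensity_eq_lintegral_mul _ (measurable_gaussianPDF _ _)
      (Measurable.lintegral_prod_right (f := fun x y => gaussianPDF (m2 + x) v2 y) hG)]
  simp_rw [Pi.mul_apply]
  -- swap order of integration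
  have hmeas : Measurable (Function.uncurry fun x y =>
      gaussianPDF m1 v1 x * s.indicator (gaussianPDF (m2 + x) v2) y) :=
    ((measurable_gaussianPDF m1 v1).comp measurable_fst).mul hGind
  calc ∫⁻ x, gaussianPDF m1 v1 x * ∫⁻ y in s, gaussianPDF (m2 + x) v2 y
      = ∫⁻ x, ∫⁻ y, gaussianPDF m1 v1 x * s.indicator (gaussianPDF (m2 + x) v2) y := by
        congr 1 with x
        rw [lintegral_const_mul _ ((measurable_gaussianPDF _ _).indicator hs), ← lintegral_indicator hs]
    _ = ∫⁻ y, ∫⁻ x, gaussianPDF m1 v1 x * s.indicator (gaussianPDF (m2 + x) v2) y := by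
        exact lintegral_lintegral_swap hmeas.aemeasurable
    _ = ∫⁻ y in s, ∫⁻ x, gaussianPDF m1 v1 x * gaussianPDF (m2 + x) v2 y := by
        rw [← lintegral_indicator hs]
        congr 1 with y
        by_cases hy : y ∈ s
        · simp [Set.indicator_of_mem hy]
        · simp [Set.indicator_of_notMem hy]
    _ = ∫⁻ y in s, gaussianPDF (m1 + m2) (v1 + v2) y := by
        apply setLIntegral_congr_fun hs
        intro y _
        have key : ∀ x : ℝ, gaussianPDF m1 v1 x * gaussianPDF (m2 + x) v2 y
            = gaussianPDF (m1+m2) (v1+v2) y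
              * gaussianPDF (m1 + v1*(y-m1-m2)/(v1+v2)) (v1*v2/(v1+v2)) x := by
          intro x
          simp only [gaussianPDF]
          rw [← ENNReal.ofReal_mul (gaussianPDFReal_nonneg _ _ _),
            ← ENNReal.ofReal_mul (gaussianPDFReal_nonneg _ _ _)]
          congr 1
          rw [← pdf_conv_pointwise' m1 m2 v1 v2 hv1 hv2 y x]
          congr 1
          exact (gaussianPDFReal_sub y x).symm
        simp_rw [key]
        rw [lintegral_const_mul _ (measurable_gaussianPDF _ _),
          lintegral_gaussianPDF_eq_one _ hvs, mul_one]
    _ = gaussianReal (m1 + m2) (v1 + v2) s := (gaussianReal_apply _ hv12 s).symm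
open Real in
open scoped NNReal ENNReal in
private lemma pi_gaussian_map_sum (n : ℕ) (c m : Fin n → ℝ) (v : ℝ≥0) :
    (Measure.pi fun j => gaussianReal (m j) v).map (fun x => ∑ j, c j * x j)
      = gaussianReal (∑ j, c j * m j) (∑ j, (c j ^ 2).toNNReal * v) := by
  induction n with
  | zero =>
      have : (fun x : Fin 0 → ℝ => ∑ j, c j * x j) = fun _ => (0:ℝ) := by
        ext x; simp
      rw [this, Measure.map_const]
      simp [gaussianReal_zero_var]
  | succ n ih =>
      have hmp := measurePreserving_piFinSuccAbove
        (fun j : Fin (n+1) => gaussianReal (m j) v) 0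
      set e := MeasurableEquiv.piFinSuccAbove (fun _ : Fin (n+1) => ℝ) 0 with he
      set F : ℝ × (Fin n → ℝ) → ℝ := fun p => c 0 * p.1 + ∑ j, c j.succ * p.2 j with hF
      have hFe : (fun x : Fin (n+1) → ℝ => ∑ j, c j * x j) = F ∘ e := by
        ext x
        simp only [Function.comp_apply, hF, he, MeasurableEquiv.piFinSuccAbove_apply,
          Fin.zero_succAbove, Fin.sum_univ_succ]
        rfl
      have hFm : Measurable F := by fun_prop
      have hsum : Measurable fun y : Fin n → ℝ => ∑ j, c j.succ * y j := by fun_prop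
      rw [hFe, ← Measure.map_map hFm e.measurable, hmp.map_eq]
      have hFsplit : F = (fun q : ℝ × ℝ => q.1 + q.2)
          ∘ Prod.map (fun a => c 0 * a) (fun y : Fin n → ℝ => ∑ j, c j.succ * y j) := rfl
      rw [hFsplit, ← Measure.map_map (by fun_prop) (by fun_prop),
        ← Measure.map_prod_map _ _ (by fun_prop) hsum]
      have htail : (Measure.pi fun j : Fin n => gaussianReal (m ((0:Fin (n+1)).succAbove j)) v)
          = Measure.pi fun j : Fin n => gaussianReal (m j.succ) v := by
        simp [Fin.zero_succAbove]
      rw [htail]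
      have hmul : (gaussianReal (m 0) v).map (fun a => c 0 * a)
          = gaussianReal (c 0 * m 0) (⟨(c 0)^2, sq_nonneg _⟩ * v) :=
        gaussianReal_map_const_mul (c 0)
      rw [hmul, ih (fun j => c j.succ) (fun j => m j.succ), gaussian_prod_map_add]
      congr 1
      · rw [Fin.sum_univ_succ]
      · rw [← NNReal.coe_inj]
        push_cast
        rw [Fin.sum_univ_succ]
        push_cast [Real.coe_toNNReal _ (sq_nonneg _)]
        show c 0 ^ 2 * (v:ℝ) + ∑ x : Fin n, c x.succ ^ 2 * (v:ℝ) = _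
        ring
open Real in
open scoped NNReal ENNReal in
private lemma map_withDensity_comp {α β : Type*} [MeasurableSpace α] [MeasurableSpace β]
    (μ : Measure α) {T : α → β} (hT : Measurable T) {g : β → ℝ≥0∞} (hg : Measurable g) :
    (μ.withDensity (g ∘ T)).map T = (μ.map T).withDensity g := by
  ext s hs
  rw [Measure.map_apply hT hs, withDensity_apply _ (hT hs), withDensity_apply _ hs,
    setLIntegral_map hs hg hT]
  rfl

open Real in
open scoped NNReal ENNReal in
private lemma prod_withDensity {α β : Type*} [MeasurableSpace α] [MeasurableSpace β]
    (μ : Measure α) (ν : Measure β) [SigmaFinite μ] [SigmaFinite ν]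
    {f : α → ℝ≥0∞} {g : β → ℝ≥0∞} (hf : Measurable f) (hg : Measurable g)
    [SigmaFinite (μ.withDensity f)] [SigmaFinite (ν.withDensity g)] :
    (μ.withDensity f).prod (ν.withDensity g)
      = (μ.prod ν).withDensity (fun p => f p.1 * g p.2) := by
  refine Measure.prod_eq fun s t hs ht => ?_
  rw [withDensity_apply _ (hs.prod ht), ← Measure.prod_restrict,
    withDensity_apply _ hs, withDensity_apply _ ht]
  exact lintegral_prod_mul (hf.comp measurable_id).aemeasurable hg.aemeasurable
open Real in
open scoped NNReal ENNReal in
private lemma gaussianReal_eq_withDensity_ratio (m0 m1 : ℝ) (v : ℝ≥0) (hv : v ≠ 0) :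
    gaussianReal m0 v = (gaussianReal m1 v).withDensity
      (fun x => ENNReal.ofReal (rexp ((m0 - m1)/v * x + (m1^2 - m0^2)/(2*v)))) := by
  have hvpos : (0:ℝ) < v := by positivity
  rw [gaussianReal_of_var_ne_zero m0 hv, gaussianReal_of_var_ne_zero m1 hv,
    ← withDensity_mul _ (measurable_gaussianPDF _ _) (by fun_prop)]
  congr 1
  ext x
  simp only [Pi.mul_apply, gaussianPDF]
  rw [← ENNReal.ofReal_mul (gaussianPDFReal_nonneg _ _ _)]
  congr 1
  simp only [gaussianPDFReal]
  have h : rexp (-(x - m0)^2/(2*(v:ℝ))) = rexp (-(x - m1)^2/(2*(v:ℝ)))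
      * rexp ((m0-m1)/(v:ℝ) * x + (m1^2-m0^2)/(2*(v:ℝ))) := by
    rw [← Real.exp_add]
    congr 1
    field_simp
    ring
  rw [h]
  ring
open Real in
open scoped NNReal ENNReal in
private lemma pi_gaussian_withDensity (n : ℕ) (m0 m1 : Fin n → ℝ) (v : ℝ≥0) (hv : v ≠ 0) :
    Measure.pi (fun j => gaussianReal (m0 j) v)
      = (Measure.pi fun j => gaussianReal (m1 j) v).withDensity
          (fun x => ENNReal.ofReal (rexp (∑ j,
            ((m0 j - m1 j)/v * x j + ((m1 j)^2 - (m0 j)^2)/(2*(v:ℝ)))))) := by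
  induction n with
  | zero =>
      have : (fun x : Fin 0 → ℝ => ENNReal.ofReal (rexp (∑ j : Fin 0,
          ((m0 j - m1 j)/v * x j + ((m1 j)^2 - (m0 j)^2)/(2*(v:ℝ)))))) = fun _ => 1 := by
        ext x; simp
      rw [this, show (fun _ : (Fin 0 → ℝ) => (1:ℝ≥0∞)) = 1 from rfl, withDensity_one,
        Measure.pi_of_empty, Measure.pi_of_empty]
  | succ n ih =>
      have hmp0 := measurePreserving_piFinSuccAbove
        (fun j : Fin (n+1) => gaussianReal (m0 j) v) 0
      have hmp1 := measurePreserving_piFinSuccAbove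
        (fun j : Fin (n+1) => gaussianReal (m1 j) v) 0
      set e := MeasurableEquiv.piFinSuccAbove (fun _ : Fin (n+1) => ℝ) 0 with he
      set φ : Fin (n+1) → ℝ → ℝ :=
        fun j y => (m0 j - m1 j)/v * y + ((m1 j)^2 - (m0 j)^2)/(2*(v:ℝ)) with hφ
      have hφm : ∀ j, Measurable (φ j) := by intro j; fun_prop
      set G : (Fin (n+1) → ℝ) → ℝ≥0∞ :=
        fun x => ENNReal.ofReal (rexp (∑ j, φ j (x j))) with hG
      have hGm : Measurable G := by
        apply Measurable.ennreal_ofReal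
        apply Real.measurable_exp.comp
        exact Finset.measurable_sum _ (fun j _ => (hφm j).comp (measurable_pi_apply j))
      set r0 : ℝ → ℝ≥0∞ := fun y => ENNReal.ofReal (rexp (φ 0 y)) with hr0
      set R : (Fin n → ℝ) → ℝ≥0∞ :=
        fun y => ENNReal.ofReal (rexp (∑ j : Fin n, φ j.succ (y j))) with hR
      have hr0m : Measurable r0 := (Real.measurable_exp.comp (hφm 0)).ennreal_ofReal
      have hRm : Measurable R := by
        apply Measurable.ennreal_ofReal
        apply Real.measurable_exp.comp
        exact Finset.measurable_sum _ (fun j _ => (hφm j.succ).comp (measurable_pi_apply j))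
      have htail0 : (Measure.pi fun j : Fin n => gaussianReal (m0 ((0:Fin (n+1)).succAbove j)) v)
          = Measure.pi fun j : Fin n => gaussianReal (m0 j.succ) v := by
        simp [Fin.zero_succAbove]
      have htail1 : (Measure.pi fun j : Fin n => gaussianReal (m1 ((0:Fin (n+1)).succAbove j)) v)
          = Measure.pi fun j : Fin n => gaussianReal (m1 j.succ) v := by
        simp [Fin.zero_succAbove]
      have step0 : Measure.pi (fun j : Fin (n+1) => gaussianReal (m0 j) v)
          = ((gaussianReal (m0 0) v).prod
              (Measure.pi fun j : Fin n => gaussianReal (m0 j.succ) v)).map e.symm := by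
        rw [← htail0]
        exact (MeasurePreserving.symm e hmp0).map_eq.symm
      rw [step0, gaussianReal_eq_withDensity_ratio (m0 0) (m1 0) v hv,
        ih (fun j => m0 j.succ) (fun j => m1 j.succ)]
      have hwd1 : SigmaFinite ((gaussianReal (m1 0) v).withDensity r0) := by
        rw [← gaussianReal_eq_withDensity_ratio (m0 0) (m1 0) v hv]; infer_instance
      have hwd2 : SigmaFinite ((Measure.pi fun j : Fin n =>
          gaussianReal (m1 j.succ) v).withDensity R) := by
        rw [← ih (fun j => m0 j.succ) (fun j => m1 j.succ)]; infer_instance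
      rw [prod_withDensity _ _ hr0m hRm]
      have hcomp : (fun p : ℝ × (Fin n → ℝ) => r0 p.1 * R p.2) = G ∘ e.symm := by
        ext p
        simp only [Function.comp_apply, hr0, hR, hG, he,
          MeasurableEquiv.piFinSuccAbove_symm_apply, Fin.insertNth_zero,
          Fin.sum_univ_succ, Fin.cons_zero, Fin.cons_succ]
        rw [← ENNReal.ofReal_mul (Real.exp_nonneg _), ← Real.exp_add]
        simp [Fin.insertNthEquiv, Fin.insertNth_zero]
      rw [hcomp, map_withDensity_comp _ e.symm.measurable hGm, ← htail1, (MeasurePreserving.symm e hmp1).map_eq]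

/-- Total variation distance between two measures:
`sup_{A measurable} |P(A) - Q(A)|`. -/
noncomputable def tv {Ω : Type*} [MeasurableSpace Ω] (P Q : Measure Ω) : ℝ :=
  ⨆ A : {A : Set Ω // MeasurableSet A}, |(P A.1).toReal - (Q A.1).toReal|

/-- The Gauss error function `erf x = (2/√π) ∫₀ˣ exp (-t²) dt`. -/
noncomputable def erf (x : ℝ) : ℝ :=
  (2 / Real.sqrt Real.pi) * ∫ t in (0:ℝ)..x, Real.exp (-t ^ 2)

open Real in
open scoped NNReal ENNReal in
private lemma tv_eq_of_withDensity {Ω : Type*} [MeasurableSpace Ω] (P Q : Measure Ω)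
    [IsProbabilityMeasure P] [IsProbabilityMeasure Q] {h : Ω → ℝ≥0∞} (hm : Measurable h)
    (hPQ : P = Q.withDensity h) :
    tv P Q = (P {x | 1 ≤ h x}).toReal - (Q {x | 1 ≤ h x}).toReal := by
  set S := {x | 1 ≤ h x} with hSdef
  have hS : MeasurableSet S := measurableSet_le measurable_const hm
  have key1 : ∀ B, MeasurableSet B → B ⊆ S → Q B ≤ P B := by
    intro B hB hBS
    rw [hPQ, withDensity_apply _ hB]
    calc Q B = ∫⁻ _ in B, 1 ∂Q := (setLIntegral_one B).symm
    _ ≤ ∫⁻ x in B, h x ∂Q := setLIntegral_mono' hB (fun x hx => hBS hx)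
  have key2 : ∀ B, MeasurableSet B → B ⊆ Sᶜ → P B ≤ Q B := by
    intro B hB hBS
    rw [hPQ, withDensity_apply _ hB]
    calc ∫⁻ x in B, h x ∂Q ≤ ∫⁻ _ in B, 1 ∂Q :=
          setLIntegral_mono' hB (fun x hx => le_of_lt (not_le.mp (hBS hx)))
    _ = Q B := setLIntegral_one B
  set φ : Set Ω → ℝ := fun A => (P A).toReal - (Q A).toReal with hφ
  have hsplit : ∀ (μ : Measure Ω) [IsProbabilityMeasure μ], ∀ A t : Set Ω, MeasurableSet t →
      (μ A).toReal = (μ (A ∩ t)).toReal + (μ (A \ t)).toReal := by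
    intro μ _ A t ht
    rw [← ENNReal.toReal_add (measure_ne_top _ _) (measure_ne_top _ _),
      measure_inter_add_diff A ht]
  have hφS : 0 ≤ φ S := by
    simp only [hφ, sub_nonneg]
    exact ENNReal.toReal_le_toReal (measure_ne_top _ _) (measure_ne_top _ _)
      |>.mpr (key1 S hS subset_rfl)
  have hmono : ∀ A, MeasurableSet A → φ A ≤ φ S := by
    intro A hA
    have h1 : φ A = φ (A ∩ S) + φ (A \ S) := by
      simp only [hφ, hsplit P A S hS, hsplit Q A S hS]; ring
    have h2 : φ S = φ (A ∩ S) + φ (S \ A) := by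
      simp only [hφ, hsplit P S A hA, hsplit Q S A hA, Set.inter_comm S A]; ring
    have h3 : φ (A \ S) ≤ 0 := by
      simp only [hφ, sub_nonpos]
      exact ENNReal.toReal_le_toReal (measure_ne_top _ _) (measure_ne_top _ _)
        |>.mpr (key2 _ (hA.diff hS) (Set.diff_subset_compl A S))
    have h4 : 0 ≤ φ (S \ A) := by
      simp only [hφ, sub_nonneg]
      exact ENNReal.toReal_le_toReal (measure_ne_top _ _) (measure_ne_top _ _)
        |>.mpr (key1 _ (hS.diff hA) Set.diff_subset)
    linarith
  have hneg : ∀ A, MeasurableSet A → -φ A ≤ φ S := by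
    intro A hA
    have hc : -φ A = φ Aᶜ := by
      simp only [hφ, prob_compl_eq_one_sub hA,
        ENNReal.toReal_sub_of_le prob_le_one ENNReal.one_ne_top]
      simp
    rw [hc]
    exact hmono Aᶜ hA.compl
  have habs : ∀ A : {A : Set Ω // MeasurableSet A}, |φ A.1| ≤ φ S := by
    intro A
    rw [abs_le]
    exact ⟨by linarith [hneg A.1 A.2], hmono A.1 A.2⟩
  refine le_antisymm (ciSup_le habs) ?_
  have : φ S ≤ |φ S| := le_abs_self _
  calc φ S ≤ |(P (⟨S, hS⟩ : {A : Set Ω // MeasurableSet A}).1).toReal - (Q S).toReal| := this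
  _ ≤ tv P Q := le_ciSup ⟨φ S, Set.forall_mem_range.mpr habs⟩ (⟨S, hS⟩ : {A : Set Ω // MeasurableSet A})
open Real in
open scoped NNReal ENNReal in
private lemma gaussian_Ico_eq_erf (w : ℝ≥0) (hw : w ≠ 0) (t : ℝ) (ht : 0 ≤ t) :
    (gaussianReal 0 w (Set.Ico (-t) t)).toReal = erf (t / Real.sqrt (2*w)) := by
  have hwpos : (0:ℝ) < w := by positivity
  have hs : (0:ℝ) < Real.sqrt (2*w) := Real.sqrt_pos.mpr (by positivity)
  rw [gaussianReal_apply_eq_integral 0 hw,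
    ENNReal.toReal_ofReal (integral_nonneg (fun x => gaussianPDFReal_nonneg _ _ _)),
    MeasureTheory.integral_Ico_eq_integral_Ioo, ← MeasureTheory.integral_Ioc_eq_integral_Ioo,
    ← intervalIntegral.integral_of_le (by linarith)]
  simp only [gaussianPDFReal, sub_zero]
  rw [intervalIntegral.integral_const_mul]
  have hint : ∀ a b : ℝ, IntervalIntegrable (fun x => rexp (-x^2/(2*(w:ℝ)))) volume a b :=
    fun a b => (Continuous.intervalIntegrable (by fun_prop) a b)
  have hsplit : (∫ x in (-t)..t, rexp (-x^2/(2*(w:ℝ))))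
      = (∫ x in (-t)..(0:ℝ), rexp (-x^2/(2*(w:ℝ)))) + ∫ x in (0:ℝ)..t, rexp (-x^2/(2*(w:ℝ))) :=
    (intervalIntegral.integral_add_adjacent_intervals (hint _ _) (hint _ _)).symm
  have heven : (∫ x in (-t)..(0:ℝ), rexp (-x^2/(2*(w:ℝ))))
      = ∫ x in (0:ℝ)..t, rexp (-x^2/(2*(w:ℝ))) := by
    have := intervalIntegral.integral_comp_neg (a := (0:ℝ)) (b := t)
      (fun x => rexp (-x^2/(2*(w:ℝ))))
    simp only [neg_sq, neg_zero] at this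
    rw [← this]
  have hsub : (∫ x in (0:ℝ)..t, rexp (-x^2/(2*(w:ℝ))))
      = Real.sqrt (2*w) * ∫ u in (0:ℝ)..(t / Real.sqrt (2*w)), rexp (-u^2) := by
    have hcomp : ∀ x : ℝ, rexp (-x^2/(2*(w:ℝ))) = rexp (-(x / Real.sqrt (2*w))^2) := by
      intro x
      congr 1
      rw [div_pow, Real.sq_sqrt (by positivity)]
      ring
    simp_rw [hcomp]
    rw [intervalIntegral.integral_comp_div (fun u => rexp (-u^2)) (ne_of_gt hs)]
    simp [smul_eq_mul]
  have hconst : (√(2 * π * (w:ℝ)))⁻¹ * (2 * √(2*(w:ℝ))) = 2 / √π := by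
    rw [show 2 * π * (w:ℝ) = π * (2*(w:ℝ)) by ring, Real.sqrt_mul pi_pos.le, mul_inv]
    field_simp
  rw [hsplit, heven, hsub]
  simp only [erf]
  rw [← hconst]
  ring

open Real in
open scoped NNReal ENNReal in
private lemma gaussian_diff_eq_erf (w : ℝ≥0) (hw : w ≠ 0) (m m' t : ℝ) (ht : 0 ≤ t) :
    (gaussianReal m w (Set.Ici (m - t))).toReal - (gaussianReal m' w (Set.Ici (m' + t))).toReal
      = erf (t / Real.sqrt (2*(w:ℝ))) := by
  have hshift : ∀ (a s : ℝ), gaussianReal a w (Set.Ici (a + s)) = gaussianReal 0 w (Set.Ici s) := by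
    intro a s
    have hmap : gaussianReal a w = (gaussianReal 0 w).map (· + a) := by
      rw [gaussianReal_map_add_const, zero_add]
    rw [hmap, Measure.map_apply (by fun_prop) measurableSet_Ici]
    congr 1
    ext y
    simp only [Set.mem_preimage, Set.mem_Ici]
    constructor <;> intro <;> linarith
  have h1 : gaussianReal m w (Set.Ici (m - t)) = gaussianReal 0 w (Set.Ici (-t)) := by
    rw [show m - t = m + (-t) by ring, hshift]
  rw [h1, hshift m' t]
  have hdisj : Disjoint (Set.Ico (-t) t) (Set.Ici t) :=
    Set.disjoint_left.mpr (fun x hx hx' => absurd hx' (not_le.mpr hx.2))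
  have hunion : gaussianReal 0 w (Set.Ici (-t))
      = gaussianReal 0 w (Set.Ico (-t) t) + gaussianReal 0 w (Set.Ici t) := by
    rw [← Set.Ico_union_Ici_eq_Ici (by linarith : -t ≤ t)]
    exact measure_union hdisj measurableSet_Ici
  rw [hunion, ENNReal.toReal_add (measure_ne_top _ _) (measure_ne_top _ _),
    add_sub_cancel_right]
  exact gaussian_Ico_eq_erf w hw t ht

open Real in
open scoped NNReal ENNReal in
/-- Total variation between two isotropic Gaussians on `ℝ^d` with the same
covariance `σ² I_d`: `tv = erf (‖μ0 - μ1‖₂ / (2√2 σ))`. -/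
theorem tv_gaussian_pi_eq_erf (d : ℕ) (hd : 1 ≤ d) (σ : ℝ) (hσ : 0 < σ)
    (μ0 μ1 : Fin d → ℝ) :
    tv (Measure.pi fun j => gaussianReal (μ0 j) ((σ ^ 2).toNNReal))
        (Measure.pi fun j => gaussianReal (μ1 j) ((σ ^ 2).toNNReal))
      = erf (Real.sqrt (∑ j, (μ0 j - μ1 j) ^ 2) / (2 * Real.sqrt 2 * σ)) := by
  set v : ℝ≥0 := (σ ^ 2).toNNReal with hvdef
  have hvr : (v : ℝ) = σ ^ 2 := Real.coe_toNNReal _ (sq_nonneg σ)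
  have hv : v ≠ 0 := by
    intro hcon
    rw [hcon] at hvr
    simp only [NNReal.coe_zero] at hvr
    nlinarith
  set c : Fin d → ℝ := fun j => μ0 j - μ1 j with hcdef
  set D2 : ℝ := ∑ j, c j ^ 2 with hD2
  have hD2nonneg : 0 ≤ D2 := Finset.sum_nonneg fun j _ => sq_nonneg _
  by_cases hD0 : D2 = 0
  · -- degenerate case: μ0 = μ1
    have hμ : μ0 = μ1 := by
      funext j
      have hj : c j ^ 2 = 0 :=
        (Finset.sum_eq_zero_iff_of_nonneg (fun i _ => sq_nonneg (c i))).mp hD0 j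
          (Finset.mem_univ j)
      have := pow_eq_zero_iff (n := 2) (by norm_num) |>.mp hj
      simp only [hcdef] at this
      linarith
    subst hμ
    have : Real.sqrt (∑ j, (μ0 j - μ0 j) ^ 2) = 0 := by simp
    rw [this, zero_div]
    have herf0 : erf 0 = 0 := by simp [erf]
    rw [herf0, tv]
    have : ∀ A : {A : Set (Fin d → ℝ) // MeasurableSet A},
        |((Measure.pi fun j => gaussianReal (μ0 j) v) A.1).toReal
          - ((Measure.pi fun j => gaussianReal (μ0 j) v) A.1).toReal| = 0 := by
      intro A; simp
    simp only [this]
    exact ciSup_const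
  · have hD2pos : 0 < D2 := lt_of_le_of_ne hD2nonneg (Ne.symm hD0)
    set D : ℝ := Real.sqrt D2 with hD
    have hDpos : 0 < D := Real.sqrt_pos.mpr hD2pos
    have hDsq : D ^ 2 = D2 := Real.sq_sqrt hD2nonneg
    set T : (Fin d → ℝ) → ℝ := fun x => ∑ j, c j * x j with hT
    have hTm : Measurable T := by fun_prop
    set φ : Fin d → ℝ → ℝ :=
      fun j y => (μ0 j - μ1 j)/(v:ℝ) * y + ((μ1 j)^2 - (μ0 j)^2)/(2*(v:ℝ)) with hφ
    set G : (Fin d → ℝ) → ℝ≥0∞ :=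
      fun x => ENNReal.ofReal (Real.exp (∑ j, φ j (x j))) with hG
    have hGm : Measurable G := by
      apply Measurable.ennreal_ofReal
      apply Real.measurable_exp.comp
      refine Finset.measurable_sum _ (fun j _ => ?_)
      have : Measurable (φ j) := by fun_prop
      exact this.comp (measurable_pi_apply j)
    have hPQ : (Measure.pi fun j => gaussianReal (μ0 j) v)
        = (Measure.pi fun j => gaussianReal (μ1 j) v).withDensity G :=
      pi_gaussian_withDensity d μ0 μ1 v hv
    rw [tv_eq_of_withDensity _ _ hGm hPQ]
    set c0 : ℝ := ∑ j, ((μ0 j)^2 - (μ1 j)^2)/2 with hc0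
    have hSset : {x | 1 ≤ G x} = T ⁻¹' (Set.Ici c0) := by
      ext x
      have hsum : ∑ j, φ j (x j) = (T x - c0)/(v:ℝ) := by
        rw [hT, hc0]
        rw [show (∑ j, c j * x j) - (∑ j, ((μ0 j)^2 - (μ1 j)^2)/2)
          = ∑ j, (c j * x j - ((μ0 j)^2 - (μ1 j)^2)/2) by rw [Finset.sum_sub_distrib]]
        rw [Finset.sum_div]
        refine Finset.sum_congr rfl fun j _ => ?_
        have hvne : (v:ℝ) ≠ 0 := by rw [hvr]; positivity
        simp only [hφ, hcdef]
        field_simp [hφ, hcdef]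
        ring
      simp only [Set.mem_setOf_eq, Set.mem_preimage, Set.mem_Ici, hG]
      rw [ENNReal.one_le_ofReal, Real.one_le_exp_iff, hsum]
      have hvpos : (0:ℝ) < v := by rw [hvr]; positivity
      rw [le_div_iff₀ hvpos, zero_mul, sub_nonneg]
    rw [hSset, ← Measure.map_apply hTm measurableSet_Ici,
      ← Measure.map_apply hTm measurableSet_Ici,
      pi_gaussian_map_sum d c μ0 v, pi_gaussian_map_sum d c μ1 v]
    set a : ℝ := ∑ j, c j * μ0 j with ha
    set b : ℝ := ∑ j, c j * μ1 j with hb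
    set w : ℝ≥0 := ∑ j, ((c j) ^ 2).toNNReal * v with hw
    have hwr : (w:ℝ) = D2 * σ^2 := by
      rw [hw, NNReal.coe_sum, hD2, Finset.sum_mul]
      refine Finset.sum_congr rfl fun j _ => ?_
      rw [NNReal.coe_mul, Real.coe_toNNReal _ (sq_nonneg _), hvr]
    have hwne : w ≠ 0 := by
      intro hcon
      rw [hcon] at hwr
      simp only [NNReal.coe_zero] at hwr
      have : 0 < D2 * σ ^ 2 := by positivity
      linarith
    have hab : a - b = D2 := by
      rw [ha, hb, hD2, ← Finset.sum_sub_distrib]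
      refine Finset.sum_congr rfl fun j _ => ?_
      simp only [hcdef]
      ring
    have hapb : a + b = 2 * c0 := by
      rw [ha, hb, hc0, ← Finset.sum_add_distrib, Finset.mul_sum]
      refine Finset.sum_congr rfl fun j _ => ?_
      simp only [hcdef]
      ring
    set t : ℝ := (a - b)/2 with htdef
    have ht : 0 ≤ t := by rw [htdef, hab]; linarith
    have key := gaussian_diff_eq_erf w hwne a b t ht
    have h1 : a - t = c0 := by rw [htdef]; linarith
    have h2 : b + t = c0 := by rw [htdef]; linarith
    rw [h1, h2] at key
    rw [key]
    congr 1
    have hsq2 : (0:ℝ) < Real.sqrt 2 := Real.sqrt_pos.mpr (by norm_num)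
    have hsqrtw : Real.sqrt (2*(w:ℝ)) = Real.sqrt 2 * D * σ := by
      rw [show (2:ℝ)*(w:ℝ) = (Real.sqrt 2 * D * σ)^2 by
        rw [mul_pow, mul_pow, Real.sq_sqrt (by norm_num : (0:ℝ) ≤ 2), hDsq, hwr]; ring]
      exact Real.sqrt_sq (by positivity)
    rw [hsqrtw, htdef, hab, ← hDsq]
    field_simp
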